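/- For t ≥ 2 with t+2 ≡ 0 (mod 6) and n divisible by t+2, ex_3(n, Tr(K_{1,t})) = n(t²−2)/6. -/

import Mathlib

set_option linter.unusedSectionVars false
set_option linter.unusedVariables false
set_option maxHeartbeats 1600000

open Finset

/-- `H` contains the star `K_{1,t}` as a trace. -/
def HasStarTrace (t : ℕ) {V : Type*} [DecidableEq V] (H : Finset (Finset V)) : Prop :=
  ∃ (w0 : V) (w : Fin t → V) (f : Fin t → Finset V),
    Function.Injective w ∧ (∀ i, w i ≠ w0) ∧ Function.Injective f ∧
    (∀ i, f i ∈ H) ∧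
    ∀ i, f i ∩ insert w0 (Finset.image w Finset.univ) = {w0, w i}


section Upper
variable {V : Type*} [DecidableEq V] [Fintype V]

def DR (G : Finset (Finset V)) (m : ℕ) : Prop :=
  ∃ F : Finset (Finset V × V), F.card = m ∧ (∀ z ∈ F, z.1 ∈ G ∧ z.2 ∈ z.1) ∧
    ∀ z ∈ F, ∀ z' ∈ F, z ≠ z' → z.2 ∉ z'.1

lemma DR_mono {G : Finset (Finset V)} {m m' : ℕ} (h : m' ≤ m) (hdr : DR G m) : DR G m' := by
  obtain ⟨F, hc, h1, h2⟩ := hdr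
  obtain ⟨F', hF's, hF'c⟩ := Finset.exists_subset_card_eq (show m' ≤ F.card by omega)
  exact ⟨F', hF'c, fun z hz => h1 z (hF's hz), fun z hz z' hz' => h2 z (hF's hz) z' (hF's hz')⟩

noncomputable def oth (x : V) (p : Finset V) : V :=
  if h : (p.erase x).Nonempty then h.choose else x

lemma oth_spec {x : V} {p : Finset V} (hx : x ∈ p) (h2 : p.card = 2) :
    oth x p ∈ p ∧ oth x p ≠ x ∧ p = {x, oth x p} ∧ p.erase x = {oth x p} := by
  have hc : (p.erase x).card = 1 := by rw [Finset.card_erase_of_mem hx, h2]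
  have hne : (p.erase x).Nonempty := Finset.card_pos.mp (by omega)
  have hmem : oth x p ∈ p.erase x := by rw [oth, dif_pos hne]; exact hne.choose_spec
  obtain ⟨a, ha⟩ := Finset.card_eq_one.mp hc
  have hoa : oth x p = a := by rw [ha] at hmem; exact Finset.mem_singleton.mp hmem
  subst hoa
  have hmem' := hmem
  rw [Finset.mem_erase] at hmem'
  refine ⟨hmem'.2, hmem'.1, ?_, ha⟩
  have h5 : ({x, oth x p} : Finset V) = insert x (p.erase x) := by rw [ha]
  rw [h5, Finset.insert_erase hx]

def deg (G : Finset (Finset V)) (v : V) : ℕ := (G.filter (fun p => v ∈ p)).card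

lemma sum_deg (G : Finset (Finset V)) (S : Finset V) :
    ∑ v ∈ S, deg G v = ∑ p ∈ G, (p ∩ S).card := by
  unfold deg
  simp only [Finset.card_filter]
  rw [Finset.sum_comm]
  refine Finset.sum_congr rfl fun p _ => ?_
  rw [← Finset.card_filter]
  congr 1
  ext v; simp [Finset.mem_inter, and_comm]

noncomputable def starF (x : V) (A : Finset (Finset V)) : Finset (Finset V × V) :=
  A.image (fun p => (p, oth x p))

lemma starF_card {x : V} {A : Finset (Finset V)} : (starF x A).card = A.card :=
  Finset.card_image_of_injOn (fun p _ q _ h => congrArg Prod.fst h)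

lemma starF_mem {x : V} {A : Finset (Finset V)} (hA : ∀ p ∈ A, x ∈ p ∧ p.card = 2)
    {z : Finset V × V} (hz : z ∈ starF x A) :
    z.1 ∈ A ∧ z.2 ∈ z.1 ∧ z.2 ≠ x ∧ z.1 = {x, z.2} := by
  obtain ⟨p, hp, rfl⟩ := Finset.mem_image.mp hz
  obtain ⟨h1, h2, h3, -⟩ := oth_spec (hA p hp).1 (hA p hp).2
  exact ⟨hp, h1, h2, h3⟩

lemma starF_int {x : V} {A : Finset (Finset V)} (hA : ∀ p ∈ A, x ∈ p ∧ p.card = 2) :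
    ∀ z ∈ starF x A, ∀ z' ∈ starF x A, z ≠ z' → z.2 ∉ z'.1 := by
  intro z hz z' hz' hne hmem
  obtain ⟨hzA, hz2, hzx, hzeq⟩ := starF_mem hA hz
  obtain ⟨hz'A, hz'2, hz'x, hz'eq⟩ := starF_mem hA hz'
  rw [hz'eq] at hmem
  rcases Finset.mem_insert.mp hmem with h | h
  · exact hzx h
  · have h2 : z.2 = z'.2 := Finset.mem_singleton.mp h
    have h1 : z.1 = z'.1 := by rw [hzeq, hz'eq, h2]
    exact hne (Prod.ext h1 h2)

lemma DR_glue {G : Finset (Finset V)} {F1 F2 : Finset (Finset V × V)}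
    (m1 : ∀ z ∈ F1, z.1 ∈ G ∧ z.2 ∈ z.1) (m2 : ∀ z ∈ F2, z.1 ∈ G ∧ z.2 ∈ z.1)
    (i1 : ∀ z ∈ F1, ∀ z' ∈ F1, z ≠ z' → z.2 ∉ z'.1)
    (i2 : ∀ z ∈ F2, ∀ z' ∈ F2, z ≠ z' → z.2 ∉ z'.1)
    (c12 : ∀ z ∈ F1, ∀ z' ∈ F2, z.2 ∉ z'.1 ∧ z'.2 ∉ z.1 ∧ z.1 ≠ z'.1) :
    DR G (F1.card + F2.card) := by
  have hdisj : Disjoint F1 F2 := by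
    rw [Finset.disjoint_left]
    intro z h1 h2
    exact (c12 z h1 z h2).2.2 rfl
  refine ⟨F1 ∪ F2, by rw [Finset.card_union_of_disjoint hdisj], ?_, ?_⟩
  · intro z hz; rcases Finset.mem_union.mp hz with h | h
    exacts [m1 z h, m2 z h]
  · intro z hz z' hz' hne
    rcases Finset.mem_union.mp hz with h | h <;> rcases Finset.mem_union.mp hz' with h' | h'
    · exact i1 z h z' h' hne
    · exact (c12 z h z' h').1
    · exact (c12 z' h' z h).2.1
    · exact i2 z h z' h' hne

lemma final_arith (f Δ d g0 g1 g2 : ℕ) (hd : f = Δ + d) (hΔ : 1 ≤ Δ)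
    (h0 : 2 * g0 + d % 2 ≤ d * (d + 2)) (h1 : g1 ≤ Δ * (d + 1))
    (h23 : g1 + 2 * g2 ≤ (Δ + 1) * Δ) :
    2 * (g0 + g1 + g2) + f % 2 ≤ f * (f + 2) := by
  subst hd
  rcases Nat.eq_zero_or_pos d with rfl | hdpos
  · have h00 : g0 = 0 := by omega
    have h1' : g1 ≤ Δ := by simpa using h1
    have hkey : (Δ + 0) * ((Δ + 0) + 2) = (Δ + 1) * Δ + Δ := by ring
    have hpar : ((Δ + 1) * Δ) % 2 = 0 := by
      rw [Nat.mul_comm]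
      exact Nat.even_iff.mp (Nat.even_mul_succ_self Δ)
    rw [hkey]
    generalize hP : (Δ + 1) * Δ = P at h23 hpar ⊢
    omega
  · have hq : 0 < Δ * d := Nat.mul_pos hΔ hdpos
    have hkey : (Δ + d) * ((Δ + d) + 2) = d * (d + 2) + Δ * (d + 1) + (Δ + 1) * Δ + Δ * d := by
      ring
    rw [hkey]
    generalize hp1 : d * (d + 2) = p1 at h0 ⊢
    generalize hp2 : Δ * (d + 1) = p2 at h1 ⊢
    generalize hp3 : (Δ + 1) * Δ = p3 at h23 ⊢
    generalize hp4 : Δ * d = p4 at hq ⊢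
    omega

theorem FP : ∀ (f : ℕ) (G : Finset (Finset V)), (∀ p ∈ G, p.card = 2) → ¬ DR G (f + 1) →
    2 * G.card + f % 2 ≤ f * (f + 2) := by
  intro f
  induction f using Nat.strong_induction_on with
  | _ f ih =>
    intro G h2 hndr
    classical
    rcases G.eq_empty_or_nonempty with rfl | ⟨p0, hp0⟩
    · have ha : f % 2 ≤ f := Nat.mod_le f 2
      have hb : f ≤ f * (f + 2) := Nat.le_mul_of_pos_right f (by omega)
      simpa using le_trans ha hb
    obtain ⟨y0, hy0⟩ : p0.Nonempty := Finset.card_pos.mp (by rw [h2 p0 hp0]; omega)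
    obtain ⟨x, -, hxmax⟩ :=
      Finset.exists_max_image Finset.univ (fun v => deg G v) ⟨y0, Finset.mem_univ _⟩
    set Δ := deg G x with hΔdef
    have hdegall : ∀ v, deg G v ≤ Δ := fun v => hxmax v (Finset.mem_univ v)
    set A := G.filter (fun p => x ∈ p) with hAdef
    have hAprop : ∀ p ∈ A, x ∈ p ∧ p.card = 2 := by
      intro p hp
      have h := Finset.mem_filter.mp hp
      exact ⟨h.2, h2 p h.1⟩
    have hAcard : A.card = Δ := rfl
    have hA_G : ∀ p ∈ A, p ∈ G := fun p hp => (Finset.mem_filter.mp hp).1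
    have star_mem : ∀ z ∈ starF x A, z.1 ∈ G ∧ z.2 ∈ z.1 := by
      intro z hz
      obtain ⟨h1, hz2, -, -⟩ := starF_mem hAprop hz
      exact ⟨hA_G _ h1, hz2⟩
    have hΔf : Δ ≤ f := by
      by_contra h
      push_neg at h
      have hds : DR G A.card := ⟨starF x A, starF_card, star_mem, starF_int hAprop⟩
      rw [hAcard] at hds
      exact hndr (DR_mono (by omega) hds)
    have hΔ1 : 1 ≤ Δ := by
      have hm : p0 ∈ G.filter (fun p => y0 ∈ p) := Finset.mem_filter.mpr ⟨hp0, hy0⟩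
      have h1 : 1 ≤ deg G y0 := Finset.card_pos.mpr ⟨p0, hm⟩
      exact le_trans h1 (hdegall y0)
    set N := A.image (fun p => oth x p) with hNdef
    have hothinj : ∀ p ∈ A, ∀ q ∈ A, oth x p = oth x q → p = q := by
      intro p hp q hq h
      obtain ⟨-, -, hpe, -⟩ := oth_spec (hAprop p hp).1 (hAprop p hp).2
      obtain ⟨-, -, hqe, -⟩ := oth_spec (hAprop q hq).1 (hAprop q hq).2
      rw [hpe, hqe, h]
    have hNcard : N.card = Δ := by
      rw [hNdef, Finset.card_image_of_injOn hothinj, hAcard]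
    have hxN : x ∉ N := by
      intro h
      obtain ⟨p, hp, he⟩ := Finset.mem_image.mp h
      exact (oth_spec (hAprop p hp).1 (hAprop p hp).2).2.1 he
    set S := insert x N with hSdef
    have hScard : S.card = Δ + 1 := by rw [hSdef, Finset.card_insert_of_notMem hxN, hNcard]
    have hxS : x ∈ S := Finset.mem_insert_self _ _
    have hAsubS : ∀ p ∈ A, p ⊆ S := by
      intro p hp
      obtain ⟨-, -, hpe, -⟩ := oth_spec (hAprop p hp).1 (hAprop p hp).2
      rw [hpe]
      intro z hz
      rcases Finset.mem_insert.mp hz with rfl | hz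
      · exact hxS
      · rw [Finset.mem_singleton] at hz; subst hz
        exact Finset.mem_insert_of_mem (Finset.mem_image_of_mem _ hp)
    have hsum : ∑ p ∈ G, (p ∩ S).card ≤ (Δ + 1) * Δ := by
      rw [← sum_deg]
      calc ∑ v ∈ S, deg G v ≤ S.card • Δ := Finset.sum_le_card_nsmul S _ Δ (fun v _ => hdegall v)
        _ = (Δ + 1) * Δ := by rw [hScard, smul_eq_mul]
    set G0 := G.filter (fun p => p ∩ S = ∅) with hG0def
    set G1 := G.filter (fun p => (p ∩ S).card = 1) with hG1def
    set G2 := G.filter (fun p => (p ∩ S).card = 2) with hG2def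
    have hcap2 : ∀ p ∈ G, (p ∩ S).card ≤ 2 := by
      intro p hp
      calc (p ∩ S).card ≤ p.card := Finset.card_le_card Finset.inter_subset_left
        _ = 2 := h2 p hp
    have hdisj01 : Disjoint G0 G1 := by
      rw [Finset.disjoint_left]; intro p h0 h1
      have h0' := (Finset.mem_filter.mp h0).2
      have h1' := (Finset.mem_filter.mp h1).2
      rw [h0'] at h1'; simp at h1'
    have hdisj02 : Disjoint G0 G2 := by
      rw [Finset.disjoint_left]; intro p h0 h1
      have h0' := (Finset.mem_filter.mp h0).2
      have h1' := (Finset.mem_filter.mp h1).2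
      rw [h0'] at h1'; simp at h1'
    have hdisj12 : Disjoint G1 G2 := by
      rw [Finset.disjoint_left]; intro p h0 h1
      have h0' := (Finset.mem_filter.mp h0).2
      have h1' := (Finset.mem_filter.mp h1).2
      omega
    have hlast : Disjoint (G0 ∪ G1) G2 := Finset.disjoint_union_left.mpr ⟨hdisj02, hdisj12⟩
    have hpart : G = G0 ∪ G1 ∪ G2 := by
      ext p
      simp only [hG0def, hG1def, hG2def, Finset.mem_union, Finset.mem_filter]
      constructor
      · intro hp
        have h02 := hcap2 p hp
        have hcases : (p ∩ S).card = 0 ∨ (p ∩ S).card = 1 ∨ (p ∩ S).card = 2 := by omega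
        rcases hcases with h | h | h
        · exact Or.inl (Or.inl ⟨hp, Finset.card_eq_zero.mp h⟩)
        · exact Or.inl (Or.inr ⟨hp, h⟩)
        · exact Or.inr ⟨hp, h⟩
      · rintro ((⟨hp, -⟩ | ⟨hp, -⟩) | ⟨hp, -⟩) <;> exact hp
    have hcards : G.card = G0.card + G1.card + G2.card := by
      rw [hpart, Finset.card_union_of_disjoint hlast, Finset.card_union_of_disjoint hdisj01]
    have e0 : ∑ p ∈ G0, (p ∩ S).card = 0 :=
      Finset.sum_eq_zero (fun p hp => by rw [(Finset.mem_filter.mp hp).2]; simp)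
    have e1 : ∑ p ∈ G1, (p ∩ S).card = G1.card := by
      rw [Finset.card_eq_sum_ones]
      exact Finset.sum_congr rfl (fun p hp => (Finset.mem_filter.mp hp).2)
    have e2 : ∑ p ∈ G2, (p ∩ S).card = 2 * G2.card := by
      rw [Finset.sum_const_nat (m := 2) (fun p hp => (Finset.mem_filter.mp hp).2), mul_comm]
    have hsumsplit : ∑ p ∈ G, (p ∩ S).card = G1.card + 2 * G2.card := by
      rw [hpart, Finset.sum_union hlast, Finset.sum_union hdisj01, e0, e1, e2]
      omega
    have hG12 : G1.card + 2 * G2.card ≤ (Δ + 1) * Δ := hsumsplit ▸ hsum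
    -- G0 bound
    have hG0sub : ∀ p ∈ G0, p ∈ G ∧ p ∩ S = ∅ :=
      fun p hp => ⟨(Finset.mem_filter.mp hp).1, (Finset.mem_filter.mp hp).2⟩
    have hG0ndr : ¬ DR G0 (f - Δ + 1) := by
      rintro ⟨F0, hF0c, hF0m, hF0i⟩
      apply hndr
      apply DR_mono (show f + 1 ≤ A.card + F0.card by rw [hAcard, hF0c]; omega)
      have hcross : ∀ z ∈ starF x A, ∀ z' ∈ F0, z.2 ∉ z'.1 ∧ z'.2 ∉ z.1 ∧ z.1 ≠ z'.1 := by
        intro z hz z' hz'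
        obtain ⟨hzA, hz2, hzx, hzeq⟩ := starF_mem hAprop hz
        obtain ⟨hz'G0, hz'2⟩ := hF0m z' hz'
        obtain ⟨hz'G, hz'S⟩ := hG0sub _ hz'G0
        have hzS : z.1 ⊆ S := hAsubS _ hzA
        refine ⟨?_, ?_, ?_⟩
        · intro hmem
          have hi : z.2 ∈ z'.1 ∩ S := Finset.mem_inter.mpr ⟨hmem, hzS hz2⟩
          rw [hz'S] at hi; exact absurd hi (Finset.notMem_empty _)
        · intro hmem
          have hi : z'.2 ∈ z'.1 ∩ S := Finset.mem_inter.mpr ⟨hz'2, hzS hmem⟩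
          rw [hz'S] at hi; exact absurd hi (Finset.notMem_empty _)
        · intro he
          have hx1 : x ∈ z.1 := by rw [hzeq]; exact Finset.mem_insert_self _ _
          rw [he] at hx1
          have hi : x ∈ z'.1 ∩ S := Finset.mem_inter.mpr ⟨hx1, hxS⟩
          rw [hz'S] at hi; exact absurd hi (Finset.notMem_empty _)
      have hglue := DR_glue (G := G)
        star_mem (fun z hz => ⟨(hG0sub _ (hF0m z hz).1).1, (hF0m z hz).2⟩)
        (starF_int hAprop) hF0i hcross
      rwa [starF_card] at hglue
    have hG0bound : 2 * G0.card + (f - Δ) % 2 ≤ (f - Δ) * (f - Δ + 2) :=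
      ih (f - Δ) (by omega) G0 (fun p hp => h2 p (Finset.mem_filter.mp hp).1) hG0ndr
    -- G1 bound
    have hBvcard : ∀ v ∈ N, (G.filter (fun p => p ∩ S = {v})).card ≤ f - Δ + 1 := by
      intro v hv
      by_contra hbig
      push_neg at hbig
      have hvx : v ≠ x := fun h => hxN (h ▸ hv)
      obtain ⟨B', hB'sub, hB'card⟩ :=
        Finset.exists_subset_card_eq
          (show f - Δ + 2 ≤ (G.filter (fun p => p ∩ S = {v})).card by omega)
      have hB'prop : ∀ q ∈ B', v ∈ q ∧ q.card = 2 ∧ q ∈ G ∧ q ∩ S = {v} := by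
        intro q hq
        have hq' := Finset.mem_filter.mp (hB'sub hq)
        have hvq : v ∈ q := by
          have hm : v ∈ q ∩ S := by rw [hq'.2]; exact Finset.mem_singleton_self v
          exact (Finset.mem_inter.mp hm).1
        exact ⟨hvq, h2 q hq'.1, hq'.1, hq'.2⟩
      set A' := A.filter (fun p => v ∉ p) with hA'def
      have hA'prop : ∀ p ∈ A', x ∈ p ∧ p.card = 2 :=
        fun p hp => hAprop p (Finset.mem_filter.mp hp).1
      have hA'card : Δ - 1 ≤ A'.card := by
        have hsplit : A'.card + (A.filter (fun p => ¬ v ∉ p)).card = A.card := by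
          rw [hA'def]
          exact Finset.card_filter_add_card_filter_not (p := fun p => v ∉ p)
        have hxvcard : ({x, v} : Finset V).card = 2 := by
          rw [Finset.card_insert_of_notMem
            (fun h => hvx (Finset.mem_singleton.mp h).symm), Finset.card_singleton]
        have hone : (A.filter (fun p => ¬ v ∉ p)).card ≤ 1 := by
          apply Finset.card_le_one.mpr
          intro p hp q hq
          have hp' := Finset.mem_filter.mp hp
          have hq' := Finset.mem_filter.mp hq
          have key : ∀ r ∈ A, v ∈ r → r = {x, v} := by
            intro r hr hvr
            have hrx := hAprop r hr
            have hsub : ({x, v} : Finset V) ⊆ r := by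
              intro z hz
              rcases Finset.mem_insert.mp hz with rfl | hz
              · exact hrx.1
              · rw [Finset.mem_singleton] at hz; subst hz; exact hvr
            exact (Finset.eq_of_subset_of_card_le hsub (by rw [hrx.2, hxvcard])).symm
          rw [key p hp'.1 (not_not.mp hp'.2), key q hq'.1 (not_not.mp hq'.2)]
        omega
      apply hndr
      apply DR_mono (show f + 1 ≤ A'.card + B'.card by rw [hB'card]; omega)
      have hB'pc : ∀ q ∈ B', v ∈ q ∧ q.card = 2 :=
        fun q hq => ⟨(hB'prop q hq).1, (hB'prop q hq).2.1⟩
      have m1 : ∀ z ∈ starF x A', z.1 ∈ G ∧ z.2 ∈ z.1 := by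
        intro z hz
        obtain ⟨h1, hzz, -, -⟩ := starF_mem hA'prop hz
        exact ⟨hA_G _ (Finset.mem_filter.mp h1).1, hzz⟩
      have m2 : ∀ z ∈ starF v B', z.1 ∈ G ∧ z.2 ∈ z.1 := by
        intro z hz
        obtain ⟨h1, hzz, -, -⟩ := starF_mem hB'pc hz
        exact ⟨(hB'prop _ h1).2.2.1, hzz⟩
      have hcross : ∀ z ∈ starF x A', ∀ z' ∈ starF v B', z.2 ∉ z'.1 ∧ z'.2 ∉ z.1 ∧ z.1 ≠ z'.1 := by
        intro z hz z' hz'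
        obtain ⟨hzA', hz2, hzx, hzeq⟩ := starF_mem hA'prop hz
        obtain ⟨hz'B, hz'2, hz'v, hz'eq⟩ := starF_mem hB'pc hz'
        obtain ⟨hvq, hqc, hqG, hqS⟩ := hB'prop _ hz'B
        have hzA : z.1 ∈ A := (Finset.mem_filter.mp hzA').1
        have hznv : v ∉ z.1 := (Finset.mem_filter.mp hzA').2
        have hzS : z.1 ⊆ S := hAsubS _ hzA
        refine ⟨?_, ?_, ?_⟩
        · intro hmem
          have hi : z.2 ∈ z'.1 ∩ S := Finset.mem_inter.mpr ⟨hmem, hzS hz2⟩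
          rw [hqS] at hi
          exact hznv (Finset.mem_singleton.mp hi ▸ hz2)
        · intro hmem
          have hi : z'.2 ∈ z'.1 ∩ S := Finset.mem_inter.mpr ⟨hz'2, hzS hmem⟩
          rw [hqS] at hi
          exact hz'v (Finset.mem_singleton.mp hi)
        · intro he
          have hx1 : x ∈ z.1 := by rw [hzeq]; exact Finset.mem_insert_self _ _
          rw [he] at hx1
          have hi : x ∈ z'.1 ∩ S := Finset.mem_inter.mpr ⟨hx1, hxS⟩
          rw [hqS] at hi
          exact hvx (Finset.mem_singleton.mp hi).symm
      have hglue := DR_glue (G := G) m1 m2 (starF_int hA'prop) (starF_int hB'pc) hcross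
      rwa [starF_card, starF_card] at hglue
    have hG1N : G1 = N.biUnion (fun v => G.filter (fun p => p ∩ S = {v})) := by
      ext p
      simp only [hG1def, Finset.mem_filter, Finset.mem_biUnion]
      constructor
      · rintro ⟨hpG, hpc⟩
        obtain ⟨w, hw⟩ := Finset.card_eq_one.mp hpc
        have hwi : w ∈ p ∩ S := by rw [hw]; exact Finset.mem_singleton_self w
        have hwS : w ∈ S := (Finset.mem_inter.mp hwi).2
        have hwp : w ∈ p := (Finset.mem_inter.mp hwi).1
        rcases Finset.mem_insert.mp hwS with rfl | hwN
        · exfalso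
          have hpA : p ∈ A := Finset.mem_filter.mpr ⟨hpG, hwp⟩
          have hfull : p ∩ S = p := Finset.inter_eq_left.mpr (hAsubS p hpA)
          rw [hfull] at hpc
          have := h2 p hpG
          omega
        · exact ⟨w, hwN, hpG, hw⟩
      · rintro ⟨w, hwN, hpG, hw⟩
        exact ⟨hpG, by rw [hw]; exact Finset.card_singleton w⟩
    have hG1card : G1.card ≤ Δ * (f - Δ + 1) := by
      rw [hG1N]
      calc (N.biUnion (fun v => G.filter (fun p => p ∩ S = {v}))).card
            ≤ ∑ v ∈ N, (G.filter (fun p => p ∩ S = {v})).card := Finset.card_biUnion_le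
        _ ≤ N.card • (f - Δ + 1) := Finset.sum_le_card_nsmul _ _ _ (fun v hv => hBvcard v hv)
        _ = Δ * (f - Δ + 1) := by rw [hNcard, smul_eq_mul]
    have harith := final_arith f Δ (f - Δ) G0.card G1.card G2.card (by omega) hΔ1
      hG0bound hG1card hG12
    rw [hcards]
    exact harith

end Upper

lemma trace_pullback {V V' : Type*} [DecidableEq V] [DecidableEq V'] (φ : V ≃ V') (t : ℕ)
    (H : Finset (Finset V)) (h : HasStarTrace t (H.image (fun e => e.image φ))) :
    HasStarTrace t H := by
  obtain ⟨w0, w, f, h1, h2, h3, h4, h5⟩ := h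
  refine ⟨φ.symm w0, fun i => φ.symm (w i), fun i => (f i).image φ.symm, ?_, ?_, ?_, ?_, ?_⟩
  · intro i j hij
    exact h1 (φ.symm.injective hij)
  · intro i hh
    exact h2 i (φ.symm.injective hh)
  · intro i j hij
    exact h3 (Finset.image_injective φ.symm.injective hij)
  · intro i
    obtain ⟨e, he, hei⟩ := Finset.mem_image.mp (h4 i)
    have hh : (f i).image φ.symm = e := by
      rw [← hei, Finset.image_image]
      simp
    show (f i).image φ.symm ∈ H
    rwa [hh]
  · intro i
    have himg : insert (φ.symm w0) (Finset.image (fun i => φ.symm (w i)) Finset.univ)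
        = (insert w0 (Finset.image w Finset.univ)).image φ.symm := by
      rw [Finset.image_insert, Finset.image_image]
      rfl
    rw [himg, ← Finset.image_inter _ _ φ.symm.injective, h5 i,
      Finset.image_insert, Finset.image_singleton]

lemma trace_congr {V : Type*} [DecidableEq V] {t t' : ℕ} (h : t = t')
    {H : Finset (Finset V)} (htr : HasStarTrace t H) : HasStarTrace t' H := by
  subst h; exact htr

lemma count_arith (m k : ℕ) (hk : 0 < k) :
    6 * (m * (Nat.choose (6*k) 3 - 6*k^2)) = (m * (6*k)) * ((6*k-2)^2 - 2) := by
  obtain ⟨k', rfl⟩ : ∃ k', k = k' + 1 := ⟨k-1, by omega⟩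
  have h6 : 6 * (6*(k'+1)).choose 3 = (6*(k'+1)-2)*((6*(k'+1)-1)*(6*(k'+1))) := by
    rw [show 6 * (6*(k'+1)).choose 3 = (6*(k'+1)).descFactorial 3 from by
      rw [Nat.descFactorial_eq_factorial_mul_choose]; norm_num [Nat.factorial]]
    simp [Nat.descFactorial_succ, Nat.descFactorial_zero]
  have e1 : 6*(k'+1) - 1 = 6*k'+5 := by omega
  have e2 : 6*(k'+1) - 2 = 6*k'+4 := by omega
  rw [e2] at h6 ⊢
  rw [e1] at h6
  have hB : (6*(k'+1)).choose 3 = (6*k'+4)*((6*k'+5)*(k'+1)) := by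
    have h66 : 6 * ((6*(k'+1)).choose 3) = 6 * ((6*k'+4)*((6*k'+5)*(k'+1))) := by
      rw [h6]; ring
    exact Nat.eq_of_mul_eq_mul_left (by norm_num) h66
  have hsplit : (6*(k'+1)).choose 3 = 6*(k'+1)^2 + (k'+1)*(36*k'^2+48*k'+14) := by
    rw [hB]; ring
  rw [hsplit, Nat.add_sub_cancel_left]
  have hsq : (6*k'+4)^2 - 2 = 36*k'^2+48*k'+14 := by
    have hx : (6*k'+4)^2 = 36*k'^2+48*k'+16 := by ring
    generalize hA : (6*k'+4)^2 = A at hx ⊢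
    generalize hC : k'^2 = C at hx ⊢
    omega
  rw [hsq]
  ring


theorem upper_bound (t n : ℕ) (ht : 2 ≤ t) (heven : t % 2 = 0) (H : Finset (Finset (Fin n)))
    (h3 : ∀ e ∈ H, e.card = 3) (hns : ¬ HasStarTrace t H) :
    6 * H.card ≤ n * (t ^ 2 - 2) := by
  classical
  have hlink : ∀ v : Fin n, ¬ DR ((H.filter (fun e => v ∈ e)).image (fun e => e.erase v)) t := by
    intro v hdr
    apply hns
    obtain ⟨F, hFc, hFm, hFi⟩ := hdr
    have hE : Fin t ≃ {z // z ∈ F} := (F.equivFin.trans (finCongr hFc)).symm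
    set ee : Fin t → Finset (Fin n) := fun i => (hE i).val.1 with heedef
    set aa : Fin t → Fin n := fun i => (hE i).val.2 with haadef
    have hmemF : ∀ i, (hE i).val ∈ F := fun i => (hE i).2
    have hvalinj : Function.Injective (fun i => (hE i).val) := by
      intro i j h
      exact hE.injective (Subtype.ext h)
    have hL : ∀ i, v ∉ ee i ∧ insert v (ee i) ∈ H := by
      intro i
      have hmem := (hFm _ (hmemF i)).1
      obtain ⟨h, hh, he⟩ := Finset.mem_image.mp hmem
      have hh' := Finset.mem_filter.mp hh
      simp only [heedef]
      constructor
      · rw [← he]; exact Finset.notMem_erase v h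
      · rw [← he, Finset.insert_erase hh'.2]; exact hh'.1
    have haaee : ∀ i, aa i ∈ ee i := fun i => (hFm _ (hmemF i)).2
    have haa : ∀ i j, i ≠ j → aa i ∉ ee j := by
      intro i j hne
      have hzz : (hE i).val ≠ (hE j).val := fun h => hne (hvalinj h)
      exact hFi _ (hmemF i) _ (hmemF j) hzz
    have hee : ∀ i j, i ≠ j → ee i ≠ ee j := by
      intro i j hne he
      exact haa i j hne (he ▸ haaee i)
    refine ⟨v, aa, fun i => insert v (ee i), ?_, ?_, ?_, ?_, ?_⟩
    · intro i j hij
      by_contra hne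
      exact haa i j hne (hij ▸ haaee j)
    · intro i h
      exact (hL i).1 (h ▸ haaee i)
    · intro i j hij
      by_contra hne
      apply hee i j hne
      have hij' : insert v (ee i) = insert v (ee j) := hij
      have h1 : (insert v (ee i)).erase v = (insert v (ee j)).erase v := by rw [hij']
      rwa [Finset.erase_insert (hL i).1, Finset.erase_insert (hL j).1] at h1
    · intro i; exact (hL i).2
    · intro i
      ext z
      simp only [Finset.mem_inter, Finset.mem_insert, Finset.mem_image, Finset.mem_univ,
        true_and, Finset.mem_singleton]
      constructor
      · rintro ⟨hz1, hz2⟩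
        rcases hz1 with rfl | hz1
        · exact Or.inl rfl
        rcases hz2 with rfl | ⟨j, hj⟩
        · exact Or.inl rfl
        · subst hj
          rcases eq_or_ne j i with rfl | hne
          · exact Or.inr rfl
          · exact absurd hz1 (haa j i hne)
      · rintro (rfl | rfl)
        · exact ⟨Or.inl rfl, Or.inl rfl⟩
        · exact ⟨Or.inr (haaee i), Or.inr ⟨i, rfl⟩⟩
  have hdegb : ∀ v : Fin n, 2 * deg H v + 2 ≤ t ^ 2 := by
    intro v
    set L := (H.filter (fun e => v ∈ e)).image (fun e => e.erase v) with hLdef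
    have hLcard : L.card = deg H v := by
      rw [hLdef]
      apply Finset.card_image_of_injOn
      intro e he e' he' hh
      have hh' : e.erase v = e'.erase v := hh
      have h1 := Finset.mem_filter.mp he
      have h2' := Finset.mem_filter.mp he'
      rw [← Finset.insert_erase h1.2, hh', Finset.insert_erase h2'.2]
    have hL2 : ∀ p ∈ L, p.card = 2 := by
      intro p hp
      obtain ⟨e, he, rfl⟩ := Finset.mem_image.mp hp
      have h1 := Finset.mem_filter.mp he
      rw [Finset.card_erase_of_mem h1.2, h3 e h1.1]
    have hfp := FP (t - 1) L hL2 (by rw [Nat.sub_add_cancel (by omega)]; exact hlink v)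
    have hodd : (t - 1) % 2 = 1 := by omega
    have hexp : (t - 1) * (t - 1 + 2) + 1 = t ^ 2 := by
      obtain ⟨s, rfl⟩ : ∃ s, t = s + 1 := ⟨t - 1, by omega⟩
      simp only [Nat.add_sub_cancel]
      ring
    rw [hLcard] at hfp
    generalize hT : t ^ 2 = T at hexp ⊢
    generalize hM : (t - 1) * (t - 1 + 2) = M at hfp hexp
    omega
  have hsum : ∑ v : Fin n, deg H v = 3 * H.card := by
    calc ∑ v : Fin n, deg H v = ∑ p ∈ H, (p ∩ Finset.univ).card := sum_deg H Finset.univ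
      _ = ∑ p ∈ H, 3 := Finset.sum_congr rfl (fun p hp => by rw [Finset.inter_univ, h3 p hp])
      _ = 3 * H.card := by rw [Finset.sum_const, smul_eq_mul, mul_comm]
  have h6 : 6 * H.card = ∑ v : Fin n, 2 * deg H v := by
    rw [← Finset.mul_sum, hsum]; ring
  rw [h6]
  calc ∑ v : Fin n, 2 * deg H v ≤ ∑ _v : Fin n, (t ^ 2 - 2) :=
        Finset.sum_le_sum (fun v _ => by have := hdegb v; omega)
    _ = n * (t ^ 2 - 2) := by simp [Finset.sum_const, Finset.card_univ, mul_comm]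
section Lower
variable (m k : ℕ) [NeZero (2*k)]

abbrev W : Type := Fin m × ZMod 3 × ZMod (2*k)

def Blk (b : Fin m) : Finset (W m k) := Finset.univ.filter (fun v => v.1 = b)

lemma mem_Blk {b : Fin m} {v : W m k} : v ∈ Blk m k b ↔ v.1 = b := by
  simp [Blk]

lemma Blk_card (b : Fin m) : (Blk m k b).card = 6 * k := by
  have h : Blk m k b = (Finset.univ : Finset (ZMod 3 × ZMod (2*k))).image (fun z => (b, z)) := by
    ext v
    simp only [mem_Blk, Finset.mem_image, Finset.mem_univ, true_and]
    constructor
    · intro h; exact ⟨v.2, by rw [← h]⟩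
    · rintro ⟨z, rfl⟩; rfl
  have hc : Fintype.card (ZMod 3 × ZMod (2*k)) = 3 * (2*k) := by simp [ZMod.card]
  rw [h, Finset.card_image_of_injective _ (fun z z' hz => by simpa using hz),
    Finset.card_univ, hc]
  ring

lemma triple_card {α : Type*} [DecidableEq α] {p q r : α} (h1 : p ≠ q) (h2 : p ≠ r)
    (h3 : q ≠ r) : ({p, q, r} : Finset α).card = 3 := by
  rw [Finset.card_insert_of_notMem (by simp [h1, h2]),
    Finset.card_insert_of_notMem (by simp [h3]), Finset.card_singleton]

lemma lvl_ne (a : ZMod 3) : a ≠ a + 1 := by revert a; decide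

def T1mk (b : Fin m) (a : ZMod 3) (s : Finset (ZMod (2*k))) : Finset (W m k) :=
  (s.image (fun z => (b, a, z))) ∪ {(b, a+1, s.sum id)}

lemma T1mk_pair (b : Fin m) (a : ZMod 3) {x y : ZMod (2*k)} (hxy : x ≠ y) :
    T1mk m k b a {x, y} = {(b,a,x), (b,a,y), (b,a+1,x+y)} := by
  ext v
  simp [T1mk, Finset.sum_pair hxy, or_assoc]

def cj (j : Fin k) : ZMod (2*k) := ((j : ℕ) : ZMod (2*k))

def T2mk (b : Fin m) (a : ZMod 3) (u : ZMod (2*k)) : Finset (W m k) :=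
  {(b, a, u), (b, a, u + (k : ZMod (2*k))), (b, a+1, u + u)}

lemma kne (hk : 0 < k) : ((k : ℕ) : ZMod (2*k)) ≠ 0 := by
  intro h
  have hv := ZMod.val_cast_of_lt (show k < 2*k by omega)
  rw [h] at hv
  simp only [ZMod.val_zero] at hv
  omega

lemma kk_zero : (k : ZMod (2*k)) + (k : ZMod (2*k)) = 0 := by
  have h0 : ((2*k : ℕ) : ZMod (2*k)) = 0 := ZMod.natCast_self _
  push_cast at h0
  linear_combination h0

lemma levelmem {b : Fin m} {a c : ZMod 3} {x y z w : ZMod (2*k)}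
    (h : (b, c, w) ∈ ({(b,a,x), (b,a,y), (b,a+1,z)} : Finset (W m k))) :
    (c = a ∧ (w = x ∨ w = y)) ∨ (c = a + 1 ∧ w = z) := by
  simp only [Finset.mem_insert, Finset.mem_singleton, Prod.mk.injEq] at h
  rcases h with ⟨-, h1, h2⟩ | ⟨-, h1, h2⟩ | ⟨-, h1, h2⟩
  · exact Or.inl ⟨h1, Or.inl h2⟩
  · exact Or.inl ⟨h1, Or.inr h2⟩
  · exact Or.inr ⟨h1, h2⟩

lemma shape_eq {b : Fin m} {a a' : ZMod 3} {x y z x' y' z' : ZMod (2*k)}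
    (hxy : x ≠ y) (hxy' : x' ≠ y')
    (h : ({(b,a,x), (b,a,y), (b,a+1,z)} : Finset (W m k)) = {(b,a',x'), (b,a',y'), (b,a'+1,z')}) :
    a = a' ∧ ({x, y} : Finset (ZMod (2*k))) = {x', y'} ∧ z = z' := by
  have hmx' : (b, a', x') ∈ ({(b,a,x), (b,a,y), (b,a+1,z)} : Finset (W m k)) := by
    rw [h]; simp
  have hmz' : (b, a'+1, z') ∈ ({(b,a,x), (b,a,y), (b,a+1,z)} : Finset (W m k)) := by
    rw [h]; simp
  have f1 : ∀ c : ZMod 3, ¬(c + 1 + 1 = c) := by decide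
  have f2 : ∀ c : ZMod 3, ¬(c + 1 + 1 = c + 1) := by decide
  have f3 : ∀ c : ZMod 3, ¬(c + 1 = c) := by decide
  have haa : a = a' := by
    rcases levelmem m k hmx' with ⟨h1, -⟩ | ⟨h1, -⟩
    · exact h1.symm
    · rcases levelmem m k hmz' with ⟨h2, -⟩ | ⟨h2, -⟩
      · exfalso; rw [h1] at h2; exact f1 a h2
      · exfalso; rw [h1] at h2; exact f2 a h2
  subst haa
  have hz : z = z' := by
    rcases levelmem m k hmz' with ⟨h1, -⟩ | ⟨-, h2⟩
    · exact absurd h1 (f3 a)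
    · exact h2.symm
  refine ⟨rfl, ?_, hz⟩
  have hmy' : (b, a, y') ∈ ({(b,a,x), (b,a,y), (b,a+1,z)} : Finset (W m k)) := by
    rw [h]; simp
  have hsub : ({x', y'} : Finset (ZMod (2*k))) ⊆ {x, y} := by
    intro w hw
    rcases Finset.mem_insert.mp hw with rfl | hw
    · rcases levelmem m k hmx' with ⟨-, h2⟩ | ⟨h1, -⟩
      · simpa using h2
      · exact absurd h1.symm (f3 a)
    · rw [Finset.mem_singleton] at hw; subst hw
      rcases levelmem m k hmy' with ⟨-, h2⟩ | ⟨h1, -⟩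
      · simpa using h2
      · exact absurd h1.symm (f3 a)
  have hc : ({x, y} : Finset (ZMod (2*k))).card = 2 := by
    rw [Finset.card_insert_of_notMem (by simpa using hxy), Finset.card_singleton]
  have hc' : ({x', y'} : Finset (ZMod (2*k))).card = 2 := by
    rw [Finset.card_insert_of_notMem (by simpa using hxy'), Finset.card_singleton]
  exact (Finset.eq_of_subset_of_card_le hsub (by omega)).symm

def T1part (b : Fin m) : Finset (Finset (W m k)) :=
  (((Finset.univ : Finset (ZMod 3)) ×ˢ ((Finset.univ : Finset (ZMod (2*k))).powersetCard 2))).image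
    (fun az => T1mk m k b az.1 az.2)

def T2part (b : Fin m) : Finset (Finset (W m k)) :=
  (((Finset.univ : Finset (ZMod 3)) ×ˢ (Finset.univ : Finset (Fin k)))).image
    (fun aj => T2mk m k b aj.1 (cj k aj.2))

def CovB (b : Fin m) : Finset (Finset (W m k)) := T1part m k b ∪ T2part m k b

def Cov : Finset (Finset (W m k)) := Finset.univ.biUnion (fun b => CovB m k b)

def TriB (b : Fin m) : Finset (Finset (W m k)) := (Blk m k b).powersetCard 3

def Hlow : Finset (Finset (W m k)) := Finset.univ.biUnion (fun b => TriB m k b \ Cov m k)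

lemma T2mk_eq (b : Fin m) (a : ZMod 3) (u : ZMod (2*k)) :
    T2mk m k b a u = {(b,a,u), (b,a,u + (k : ZMod (2*k))), (b,a+1,u+u)} := rfl

lemma CovB_struct (hk : 0 < k) (b : Fin m) :
    ∀ T ∈ CovB m k b, (∀ v ∈ T, v.1 = b) ∧ T.card = 3 := by
  intro T hT
  rcases Finset.mem_union.mp hT with hT | hT
  · obtain ⟨az, hazm, rfl⟩ := Finset.mem_image.mp hT
    have hcard2 := (Finset.mem_powersetCard.mp (Finset.mem_product.mp hazm).2).2
    obtain ⟨x, y, hxy, hs⟩ := Finset.card_eq_two.mp hcard2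
    rw [hs, T1mk_pair m k b az.1 hxy]
    constructor
    · intro v hv
      simp only [Finset.mem_insert, Finset.mem_singleton] at hv
      rcases hv with rfl | rfl | rfl <;> rfl
    · exact triple_card (fun h => hxy (congrArg (fun v => v.2.2) h))
        (fun h => lvl_ne az.1 (congrArg (fun v => v.2.1) h))
        (fun h => lvl_ne az.1 (congrArg (fun v => v.2.1) h))
  · obtain ⟨aj, hajm, rfl⟩ := Finset.mem_image.mp hT
    rw [T2mk_eq]
    constructor
    · intro v hv
      simp only [Finset.mem_insert, Finset.mem_singleton] at hv
      rcases hv with rfl | rfl | rfl <;> rfl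
    · refine triple_card ?_ (fun h => lvl_ne aj.1 (congrArg (fun v => v.2.1) h))
        (fun h => lvl_ne aj.1 (congrArg (fun v => v.2.1) h))
      intro h
      have h2 := congrArg (fun v => v.2.2) h
      simp only at h2
      exact kne k hk (left_eq_add.mp h2)

lemma CovB_sub (hk : 0 < k) (b : Fin m) : CovB m k b ⊆ TriB m k b := by
  intro T hT
  obtain ⟨hfst, hcard⟩ := CovB_struct m k hk b T hT
  rw [TriB, Finset.mem_powersetCard]
  exact ⟨fun v hv => (mem_Blk m k).mpr (hfst v hv), hcard⟩

lemma T1mk_mem_T1part (b : Fin m) (a : ZMod 3) {x y : ZMod (2*k)} (hxy : x ≠ y) :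
    T1mk m k b a {x,y} ∈ T1part m k b := by
  unfold T1part
  have hidx : ((a, ({x,y} : Finset (ZMod (2*k)))) : ZMod 3 × Finset (ZMod (2*k)))
      ∈ ((Finset.univ : Finset (ZMod 3)) ×ˢ
        ((Finset.univ : Finset (ZMod (2*k))).powersetCard 2)) := by
    rw [Finset.mem_product]
    refine ⟨Finset.mem_univ _, Finset.mem_powersetCard.mpr ⟨Finset.subset_univ _, ?_⟩⟩
    rw [Finset.card_insert_of_notMem (by simpa using hxy), Finset.card_singleton]
  exact Finset.mem_image_of_mem _ hidx

lemma T2mk_mem_T2part (b : Fin m) (a : ZMod 3) (j : Fin k) :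
    T2mk m k b a (cj k j) ∈ T2part m k b := by
  unfold T2part
  have hidx : ((a, j) : ZMod 3 × Fin k) ∈
      ((Finset.univ : Finset (ZMod 3)) ×ˢ (Finset.univ : Finset (Fin k))) :=
    Finset.mem_product.mpr ⟨Finset.mem_univ _, Finset.mem_univ _⟩
  exact Finset.mem_image_of_mem _ hidx

lemma cover_same (hk : 0 < k) (b : Fin m) (a : ZMod 3) (x1 x2 : ZMod (2*k)) (hne : x1 ≠ x2) :
    ∃ T ∈ CovB m k b, (b,a,x1) ∈ T ∧ (b,a,x2) ∈ T := by
  refine ⟨T1mk m k b a {x1, x2}, Finset.mem_union_left _ (T1mk_mem_T1part m k b a hne), ?_, ?_⟩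
  · rw [T1mk_pair m k b _ hne]; simp
  · rw [T1mk_pair m k b _ hne]; simp

lemma cover_succ (hk : 0 < k) (b : Fin m) (a : ZMod 3) (x1 x2 : ZMod (2*k)) :
    ∃ T ∈ CovB m k b, (b,a,x1) ∈ T ∧ (b,a+1,x2) ∈ T := by
  rcases eq_or_ne x2 (x1 + x1) with rfl | hne
  · have hval : (x1.val % k) < k := Nat.mod_lt _ hk
    set j : Fin k := ⟨x1.val % k, hval⟩ with hj
    have hx1lt : x1.val < 2*k := ZMod.val_lt x1
    have hcj : cj k j = x1 ∨ cj k j + (k : ZMod (2*k)) = x1 := by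
      rcases Nat.lt_or_ge x1.val k with hlt | hge
      · left
        show ((↑(x1.val % k) : ZMod (2*k))) = x1
        rw [Nat.mod_eq_of_lt hlt]
        simp [ZMod.natCast_val]
      · right
        show ((↑(x1.val % k) : ZMod (2*k))) + (k : ZMod (2*k)) = x1
        have h1 : x1.val % k = x1.val - k := by
          rw [Nat.mod_eq_sub_mod hge, Nat.mod_eq_of_lt (by omega)]
        rw [h1, ← Nat.cast_add, Nat.sub_add_cancel hge]
        simp [ZMod.natCast_val]
    refine ⟨T2mk m k b a (cj k j),
      Finset.mem_union_right _ (T2mk_mem_T2part m k b a j), ?_, ?_⟩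
    · rw [T2mk_eq]
      rcases hcj with hc | hc
      · exact Finset.mem_insert.mpr (Or.inl (by rw [hc]))
      · exact Finset.mem_insert.mpr (Or.inr (Finset.mem_insert.mpr (Or.inl (by rw [hc]))))
    · rw [T2mk_eq]
      have hcc : cj k j + cj k j = x1 + x1 := by
        rcases hcj with hc | hc
        · rw [hc]
        · linear_combination 2*hc - kk_zero k
      refine Finset.mem_insert.mpr (Or.inr (Finset.mem_insert.mpr (Or.inr
        (Finset.mem_singleton.mpr ?_))))
      rw [hcc]
  · have hne2 : x1 ≠ x2 - x1 := by
      intro h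
      apply hne
      linear_combination -h
    refine ⟨T1mk m k b a {x1, x2 - x1},
      Finset.mem_union_left _ (T1mk_mem_T1part m k b a hne2), ?_, ?_⟩
    · rw [T1mk_pair m k b _ hne2]; simp
    · rw [T1mk_pair m k b _ hne2]
      have hxx : x1 + (x2 - x1) = x2 := by ring
      rw [hxx]
      simp

lemma cover_pairs (hk : 0 < k) (b : Fin m) {p q : W m k} (hp : p.1 = b) (hq : q.1 = b)
    (hpq : p ≠ q) : ∃ T ∈ CovB m k b, p ∈ T ∧ q ∈ T := by
  obtain ⟨pb, pa, px⟩ := p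
  obtain ⟨qb, qa, qx⟩ := q
  obtain rfl : pb = b := hp
  obtain rfl : qb = pb := hq
  have tri : ∀ u w : ZMod 3, w = u ∨ w = u + 1 ∨ u = w + 1 := by decide
  rcases tri pa qa with h | h | h
  · have hne : px ≠ qx := by
      intro hh
      exact hpq (by rw [hh, h])
    rw [h]
    exact cover_same m k hk _ pa px qx hne
  · rw [h]
    exact cover_succ m k hk _ pa px qx
  · rw [h]
    obtain ⟨T, hT, h1, h2⟩ := cover_succ m k hk _ qa qx px
    exact ⟨T, hT, h2, h1⟩


lemma cj_val (j : Fin k) : (cj k j).val = (j : ℕ) :=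
  ZMod.val_cast_of_lt (by have := j.isLt; omega)

lemma T1part_card (b : Fin m) : (T1part m k b).card = 3 * Nat.choose (2*k) 2 := by
  have hinj : Set.InjOn (fun az : ZMod 3 × Finset (ZMod (2*k)) => T1mk m k b az.1 az.2)
      ↑(((Finset.univ : Finset (ZMod 3)) ×ˢ
        ((Finset.univ : Finset (ZMod (2*k))).powersetCard 2))) := by
    intro az h1 az' h2 he
    have h1' := Finset.mem_product.mp (Finset.mem_coe.mp h1)
    have h2' := Finset.mem_product.mp (Finset.mem_coe.mp h2)
    obtain ⟨x, y, hxy, hs⟩ := Finset.card_eq_two.mp (Finset.mem_powersetCard.mp h1'.2).2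
    obtain ⟨x', y', hxy', hs'⟩ := Finset.card_eq_two.mp (Finset.mem_powersetCard.mp h2'.2).2
    simp only at he
    rw [hs, hs', T1mk_pair m k b _ hxy, T1mk_pair m k b _ hxy'] at he
    obtain ⟨ha, hset, -⟩ := shape_eq m k hxy hxy' he
    exact Prod.ext ha (by rw [hs, hs', hset])
  unfold T1part
  rw [Finset.card_image_of_injOn hinj, Finset.card_product, Finset.card_univ,
    Finset.card_powersetCard, Finset.card_univ, ZMod.card, ZMod.card]

lemma T2part_card (hk : 0 < k) (b : Fin m) : (T2part m k b).card = 3 * k := by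
  have hinj : Set.InjOn (fun aj : ZMod 3 × Fin k => T2mk m k b aj.1 (cj k aj.2))
      ↑(((Finset.univ : Finset (ZMod 3)) ×ˢ (Finset.univ : Finset (Fin k)))) := by
    intro aj h1 aj' h2 he
    simp only at he
    have hne1 : cj k aj.2 ≠ cj k aj.2 + (k : ZMod (2*k)) := by
      intro h
      exact kne k hk (left_eq_add.mp h)
    have hne2 : cj k aj'.2 ≠ cj k aj'.2 + (k : ZMod (2*k)) := by
      intro h
      exact kne k hk (left_eq_add.mp h)
    rw [T2mk_eq, T2mk_eq] at he
    obtain ⟨ha, hset, -⟩ := shape_eq m k hne1 hne2 he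
    have hc : cj k aj.2 ∈
        ({cj k aj'.2, cj k aj'.2 + (k : ZMod (2*k))} : Finset (ZMod (2*k))) := by
      rw [← hset]; simp
    have hjj : aj.2 = aj'.2 := by
      rcases Finset.mem_insert.mp hc with h | h
      · have hval := congrArg ZMod.val h
        rw [cj_val, cj_val] at hval
        exact Fin.ext hval
      · rw [Finset.mem_singleton] at h
        exfalso
        have hv : (cj k aj'.2 + (k : ZMod (2*k))).val = (aj'.2 : ℕ) + k := by
          have hcast : cj k aj'.2 + (k : ZMod (2*k)) = (((aj'.2 : ℕ) + k : ℕ) : ZMod (2*k)) := by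
            push_cast; rfl
          rw [hcast]
          exact ZMod.val_cast_of_lt (by have := aj'.2.isLt; omega)
        have hval := congrArg ZMod.val h
        rw [cj_val, hv] at hval
        have hlt := aj.2.isLt
        omega
    exact Prod.ext ha hjj
  unfold T2part
  rw [Finset.card_image_of_injOn hinj, Finset.card_product, Finset.card_univ, Finset.card_univ,
    ZMod.card, Fintype.card_fin]

lemma T12_disj (hk : 0 < k) (b : Fin m) : Disjoint (T1part m k b) (T2part m k b) := by
  rw [Finset.disjoint_left]
  rintro T hT1 hT2
  obtain ⟨az, h1, rfl⟩ := Finset.mem_image.mp hT1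
  obtain ⟨aj, h2, heq⟩ := Finset.mem_image.mp hT2
  obtain ⟨x, y, hxy, hs⟩ := Finset.card_eq_two.mp
    (Finset.mem_powersetCard.mp (Finset.mem_product.mp h1).2).2
  have hne1 : cj k aj.2 ≠ cj k aj.2 + (k : ZMod (2*k)) := by
    intro h
    exact kne k hk (left_eq_add.mp h)
  rw [hs, T1mk_pair m k b _ hxy, T2mk_eq] at heq
  obtain ⟨ha, hset, hz⟩ := shape_eq m k hne1 hxy heq
  have hsum := congrArg (fun s => Finset.sum s id) hset
  simp only [Finset.sum_pair hne1, Finset.sum_pair hxy, id] at hsum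
  exact kne k hk (by linear_combination hsum - hz)

lemma CovB_card (hk : 0 < k) (b : Fin m) : (CovB m k b).card = 6 * k^2 := by
  unfold CovB
  rw [Finset.card_union_of_disjoint (T12_disj m k hk b), T1part_card, T2part_card m k hk]
  have hch : Nat.choose (2*k) 2 = k * (2*k-1) := by
    rw [Nat.choose_two_right, mul_assoc, Nat.mul_div_cancel_left _ (by norm_num)]
  rw [hch]
  obtain ⟨k', rfl⟩ : ∃ k', k = k' + 1 := ⟨k-1, by omega⟩
  have h2 : 2*(k'+1)-1 = 2*k'+1 := by omega
  rw [h2]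
  ring

lemma TriB_card (b : Fin m) : (TriB m k b).card = Nat.choose (6*k) 3 := by
  unfold TriB
  rw [Finset.card_powersetCard, Blk_card]

lemma TriB_inter_Cov (hk : 0 < k) (b : Fin m) : TriB m k b ∩ Cov m k = CovB m k b := by
  ext T
  simp only [Finset.mem_inter, Cov, Finset.mem_biUnion, Finset.mem_univ, true_and]
  constructor
  · rintro ⟨hTri, b', hb'⟩
    obtain ⟨hfst, hcard⟩ := CovB_struct m k hk b' T hb'
    obtain ⟨v, hv⟩ : T.Nonempty := Finset.card_pos.mp (by omega)
    have h1 : v.1 = b' := hfst v hv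
    have h2 : v.1 = b := (mem_Blk m k).mp ((Finset.mem_powersetCard.mp hTri).1 hv)
    have hbb : b' = b := h1.symm.trans h2
    rwa [hbb] at hb'
  · intro h
    exact ⟨CovB_sub m k hk b h, b, h⟩

lemma Hlow_three : ∀ e ∈ Hlow m k, e.card = 3 := by
  intro e he
  obtain ⟨b, -, hb⟩ := Finset.mem_biUnion.mp he
  exact (Finset.mem_powersetCard.mp (Finset.mem_sdiff.mp hb).1).2

lemma Hlow_card (hk : 0 < k) : (Hlow m k).card = m * (Nat.choose (6*k) 3 - 6*k^2) := by
  unfold Hlow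
  rw [Finset.card_biUnion]
  · have hper : ∀ b : Fin m, (TriB m k b \ Cov m k).card = Nat.choose (6*k) 3 - 6*k^2 := by
      intro b
      have h1 := Finset.card_sdiff_add_card_inter (TriB m k b) (Cov m k)
      rw [TriB_inter_Cov m k hk b, CovB_card m k hk b, TriB_card] at h1
      omega
    rw [Finset.sum_congr rfl (fun b _ => hper b), Finset.sum_const, Finset.card_univ,
      Fintype.card_fin, smul_eq_mul]
  · intro b1 h1 b2 h2 hne
    rw [Function.onFun, Finset.disjoint_left]
    intro T hT1 hT2
    have hs1 := (Finset.mem_powersetCard.mp (Finset.mem_sdiff.mp hT1).1).1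
    have hs2 := (Finset.mem_powersetCard.mp (Finset.mem_sdiff.mp hT2).1).1
    have hc := (Finset.mem_powersetCard.mp (Finset.mem_sdiff.mp hT1).1).2
    obtain ⟨v, hv⟩ : T.Nonempty := Finset.card_pos.mp (by omega)
    exact hne (((mem_Blk m k).mp (hs1 hv)).symm.trans ((mem_Blk m k).mp (hs2 hv)))


theorem Hlow_notrace (hk : 0 < k) : ¬ HasStarTrace (6*k - 2) (Hlow m k) := by
  rintro ⟨w0, w, f, hwinj, hwne, hfinj, hfmem, hfint⟩
  classical
  have hw0mem : ∀ i, w0 ∈ f i := by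
    intro i
    have h1 : w0 ∈ f i ∩ insert w0 (Finset.image w Finset.univ) := by
      rw [hfint i]; exact Finset.mem_insert_self _ _
    exact (Finset.mem_inter.mp h1).1
  have hwmem : ∀ i, w i ∈ f i := by
    intro i
    have h1 : w i ∈ f i ∩ insert w0 (Finset.image w Finset.univ) := by
      rw [hfint i]; simp
    exact (Finset.mem_inter.mp h1).1
  have hmem : ∀ i, f i ⊆ Blk m k w0.1 ∧ f i ∉ Cov m k ∧ (f i).card = 3 := by
    intro i
    obtain ⟨b, -, hb⟩ := Finset.mem_biUnion.mp (hfmem i)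
    obtain ⟨hTri, hnc⟩ := Finset.mem_sdiff.mp hb
    obtain ⟨hsub, hcard⟩ := Finset.mem_powersetCard.mp hTri
    have hbb : b = w0.1 := ((mem_Blk m k).mp (hsub (hw0mem i))).symm
    subst hbb
    exact ⟨hsub, hnc, hcard⟩
  set S0 := insert w0 (Finset.image w Finset.univ) with hS0
  have hS0sub : S0 ⊆ Blk m k w0.1 := by
    intro v hv
    rcases Finset.mem_insert.mp hv with rfl | hv
    · exact (mem_Blk m k).mpr rfl
    · obtain ⟨i, -, rfl⟩ := Finset.mem_image.mp hv
      exact (hmem i).1 (hwmem i)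
  have hS0card : S0.card = (6*k - 2) + 1 := by
    rw [hS0, Finset.card_insert_of_notMem, Finset.card_image_of_injective _ hwinj,
      Finset.card_univ, Fintype.card_fin]
    intro hc
    obtain ⟨i, -, hi⟩ := Finset.mem_image.mp hc
    exact hwne i hi
  have hdiff : (Blk m k w0.1 \ S0).card = 1 := by
    rw [Finset.card_sdiff_of_subset hS0sub, Blk_card, hS0card]
    omega
  obtain ⟨u, hu⟩ := Finset.card_eq_one.mp hdiff
  have humem : u ∈ Blk m k w0.1 \ S0 := by rw [hu]; exact Finset.mem_singleton_self u
  have huB : u ∈ Blk m k w0.1 := (Finset.mem_sdiff.mp humem).1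
  have huS : u ∉ S0 := (Finset.mem_sdiff.mp humem).2
  have huw0 : u ≠ w0 := by
    rintro rfl
    exact huS (Finset.mem_insert_self _ _)
  have hwiS : ∀ i, w i ∈ S0 := by
    intro i
    exact Finset.mem_insert_of_mem (Finset.mem_image_of_mem _ (Finset.mem_univ i))
  have huwi : ∀ i, u ≠ w i := by
    intro i h
    exact huS (h ▸ hwiS i)
  have hfi : ∀ i, f i = {w0, u, w i} := by
    intro i
    obtain ⟨hsub, hnc, hcard⟩ := hmem i
    have hpair : ({w0, w i} : Finset (W m k)) ⊆ f i := by
      intro v hv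
      rcases Finset.mem_insert.mp hv with rfl | hv
      · exact hw0mem i
      · rw [Finset.mem_singleton] at hv; subst hv; exact hwmem i
    have hpc : ({w0, w i} : Finset (W m k)).card = 2 := by
      rw [Finset.card_insert_of_notMem (by simp [Ne.symm (hwne i)]), Finset.card_singleton]
    have hdc : (f i \ {w0, w i}).card = 1 := by
      rw [Finset.card_sdiff_of_subset hpair, hcard, hpc]
    obtain ⟨z, hz⟩ := Finset.card_eq_one.mp hdc
    have hzmem : z ∈ f i \ {w0, w i} := by rw [hz]; exact Finset.mem_singleton_self z
    have hzf : z ∈ f i := (Finset.mem_sdiff.mp hzmem).1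
    have hznp : z ∉ ({w0, w i} : Finset (W m k)) := (Finset.mem_sdiff.mp hzmem).2
    have hzS0 : z ∉ S0 := by
      intro hzS
      have hzi : z ∈ f i ∩ S0 := Finset.mem_inter.mpr ⟨hzf, hzS⟩
      rw [hS0] at hzi
      rw [hfint i] at hzi
      exact hznp hzi
    have hzu : z = u := by
      have hzz : z ∈ Blk m k w0.1 \ S0 := Finset.mem_sdiff.mpr ⟨hsub hzf, hzS0⟩
      rw [hu] at hzz
      exact Finset.mem_singleton.mp hzz
    subst hzu
    apply (Finset.eq_of_subset_of_card_le ?_ ?_).symm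
    · intro v hv
      rcases Finset.mem_insert.mp hv with rfl | hv
      · exact hw0mem i
      rcases Finset.mem_insert.mp hv with rfl | hv
      · exact hzf
      · rw [Finset.mem_singleton] at hv; subst hv; exact hwmem i
    · rw [hcard, triple_card (Ne.symm huw0) (Ne.symm (hwne i)) (huwi i)]
  obtain ⟨T, hTc, hw0T, huT⟩ := cover_pairs m k hk w0.1
    (rfl : w0.1 = w0.1) ((mem_Blk m k).mp huB) (Ne.symm huw0)
  obtain ⟨hTfst, hTcard⟩ := CovB_struct m k hk w0.1 T hTc
  have hpsub : ({w0, u} : Finset (W m k)) ⊆ T := by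
    intro v hv
    rcases Finset.mem_insert.mp hv with rfl | hv
    · exact hw0T
    · rw [Finset.mem_singleton] at hv; subst hv; exact huT
  have hpc2 : ({w0, u} : Finset (W m k)).card = 2 := by
    rw [Finset.card_insert_of_notMem (by simp [Ne.symm huw0]), Finset.card_singleton]
  have hT1 : (T \ {w0, u}).card = 1 := by
    rw [Finset.card_sdiff_of_subset hpsub, hTcard, hpc2]
  obtain ⟨x, hx⟩ := Finset.card_eq_one.mp hT1
  have hxmem : x ∈ T \ {w0, u} := by rw [hx]; exact Finset.mem_singleton_self x
  have hxT : x ∈ T := (Finset.mem_sdiff.mp hxmem).1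
  have hxn : x ∉ ({w0, u} : Finset (W m k)) := (Finset.mem_sdiff.mp hxmem).2
  have hxB : x ∈ Blk m k w0.1 := (mem_Blk m k).mpr (hTfst x hxT)
  have hxu : x ≠ u := by
    intro h
    exact hxn (by rw [h]; simp)
  have hxw0 : x ≠ w0 := by
    intro h
    exact hxn (by rw [h]; simp)
  have hxS0 : x ∈ S0 := by
    by_contra hxs
    have hzz : x ∈ Blk m k w0.1 \ S0 := Finset.mem_sdiff.mpr ⟨hxB, hxs⟩
    rw [hu] at hzz
    exact hxu (Finset.mem_singleton.mp hzz)
  obtain ⟨j, -, hj⟩ : ∃ j ∈ Finset.univ, w j = x := by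
    rcases Finset.mem_insert.mp hxS0 with h | h
    · exact absurd h hxw0
    · exact Finset.mem_image.mp h
  have hTsub : ({w0, u, w j} : Finset (W m k)) ⊆ T := by
    intro v hv
    rcases Finset.mem_insert.mp hv with rfl | hv
    · exact hw0T
    rcases Finset.mem_insert.mp hv with rfl | hv
    · exact huT
    · rw [Finset.mem_singleton] at hv; subst hv; rw [hj]; exact hxT
  have hTeq : T = {w0, u, w j} := by
    apply (Finset.eq_of_subset_of_card_le hTsub ?_).symm
    rw [hTcard, triple_card (Ne.symm huw0) (Ne.symm ((hj ▸ hxw0 : w j ≠ w0))) (huwi j)]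
  have hfC : f j ∈ Cov m k := by
    rw [hfi j, ← hTeq]
    exact Finset.mem_biUnion.mpr ⟨w0.1, Finset.mem_univ _, hTc⟩
  exact (hmem j).2.1 hfC

end Lower

/-- for `t ≥ 2` with `t+2 ≡ 0 (mod 6)` and `(t+2) ∣ n`,
`ex_3(n, Tr(K_{1,t})) = n(t²−2)/6` (stated via `6·card`). -/
theorem stmt_6 (t n : ℕ) (ht : 2 ≤ t) (hmod : (t + 2) % 6 = 0) (hdvd : (t + 2) ∣ n) :
    (∃ H : Finset (Finset (Fin n)), (∀ e ∈ H, e.card = 3) ∧ ¬ HasStarTrace t H ∧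
        6 * H.card = n * (t ^ 2 - 2)) ∧
    ∀ H : Finset (Finset (Fin n)), (∀ e ∈ H, e.card = 3) → ¬ HasStarTrace t H →
      6 * H.card ≤ n * (t ^ 2 - 2) := by
  classical
  constructor
  · obtain ⟨m, rfl⟩ := hdvd
    obtain ⟨k, hk6⟩ : ∃ k, t + 2 = 6*k := ⟨(t+2)/6, by omega⟩
    have hk : 0 < k := by omega
    haveI : NeZero (2*k) := ⟨by omega⟩
    have hcard : Fintype.card (W m k) = (t+2) * m := by
      have h1 : Fintype.card (W m k) = m * (3 * (2*k)) := by simp [ZMod.card]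
      rw [h1, hk6]
      ring
    let φ : W m k ≃ Fin ((t+2)*m) := Fintype.equivFinOfCardEq hcard
    refine ⟨(Hlow m k).image (fun e => e.image φ), ?_, ?_, ?_⟩
    · intro e he
      obtain ⟨e', he', rfl⟩ := Finset.mem_image.mp he
      rw [Finset.card_image_of_injective _ φ.injective]
      exact Hlow_three m k e' he'
    · intro htr
      have ht' : t = 6*k - 2 := by omega
      exact Hlow_notrace m k hk (trace_pullback φ _ _ (trace_congr ht' htr))
    · rw [Finset.card_image_of_injective _ (Finset.image_injective φ.injective),
        Hlow_card m k hk]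
      have ht' : t = 6*k - 2 := by omega
      rw [count_arith m k hk, hk6, ht', mul_comm m (6*k)]
  · intro H h3 hns
    exact upper_bound t n ht (by omega) H h3 hns
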